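/- arXiv:1105.1829 — 4 statements merged into one kernel-verified Lean document; each statement's English description precedes it below -/
import Mathlib

section
/- Conservation of the Laplace–Runge–Lenz vector: along any solution of the Kepler dynamics, the function t ↦ v(t) × (r(t) × v(t)) − μ r(t)/|r(t)| is constant on ℝ. (This constant vector points along the apsidal line of the conic orbit, the direction computed by the paper's linear system (12).) -/
/-- Cross product on ℝ³ (Euclidean space). -/
noncomputable def cross (a b : EuclideanSpace ℝ (Fin 3)) : EuclideanSpace ℝ (Fin 3) :=
  WithLp.toLp 2 ![a 1 * b 2 - a 2 * b 1, a 2 * b 0 - a 0 * b 2, a 0 * b 1 - a 1 * b 0]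

private lemma comp_deriv' (r : ℝ → EuclideanSpace ℝ (Fin 3)) (w : EuclideanSpace ℝ (Fin 3))
    (t : ℝ) (h : HasDerivAt r w t) (i : Fin 3) : HasDerivAt (fun t => r t i) (w i) t := by
  have := (EuclideanSpace.proj i).hasFDerivAt.comp_hasDerivAt t h
  exact this

private lemma scalar_key (μ : ℝ) (r0 r1 r2 v0 v1 v2 s : ℝ → ℝ)
    (hs : ∀ t, s t ^ 2 = r0 t ^ 2 + r1 t ^ 2 + r2 t ^ 2)
    (hspos : ∀ t, 0 < s t)
    (hr0 : ∀ t, HasDerivAt r0 (v0 t) t)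
    (hr1 : ∀ t, HasDerivAt r1 (v1 t) t)
    (hr2 : ∀ t, HasDerivAt r2 (v2 t) t)
    (hv0 : ∀ t, HasDerivAt v0 (-(μ / s t ^ 3) * r0 t) t)
    (hv1 : ∀ t, HasDerivAt v1 (-(μ / s t ^ 3) * r1 t) t)
    (hv2 : ∀ t, HasDerivAt v2 (-(μ / s t ^ 3) * r2 t) t)
    (hsd : ∀ t, HasDerivAt s
      ((r0 t * v0 t + r1 t * v1 t + r2 t * v2 t) / s t) t) :
    ∀ t : ℝ,
      v1 t * (r0 t * v1 t - r1 t * v0 t) - v2 t * (r2 t * v0 t - r0 t * v2 t)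
        - μ / s t * r0 t
      = v1 0 * (r0 0 * v1 0 - r1 0 * v0 0) - v2 0 * (r2 0 * v0 0 - r0 0 * v2 0)
        - μ / s 0 * r0 0 := by
  intro t
  have key : ∀ u : ℝ, HasDerivAt (fun t =>
      v1 t * (r0 t * v1 t - r1 t * v0 t) - v2 t * (r2 t * v0 t - r0 t * v2 t)
        - μ / s t * r0 t) 0 u := by
    intro u
    have hsne : s u ≠ 0 := (hspos u).ne'
    have h1 : HasDerivAt (fun t => μ / s t * r0 t)
        ((0 * s u - μ * ((r0 u * v0 u + r1 u * v1 u + r2 u * v2 u) / s u)) / s u ^ 2 * r0 u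
          + μ / s u * v0 u) u :=
      (((hasDerivAt_const u μ).div (hsd u) hsne).mul (hr0 u))
    have h2 : HasDerivAt (fun t =>
        v1 t * (r0 t * v1 t - r1 t * v0 t) - v2 t * (r2 t * v0 t - r0 t * v2 t))
        ((-(μ / s u ^ 3) * r1 u) * (r0 u * v1 u - r1 u * v0 u)
          + v1 u * ((v0 u * v1 u + r0 u * (-(μ / s u ^ 3) * r1 u))
            - (v1 u * v0 u + r1 u * (-(μ / s u ^ 3) * r0 u)))
        - ((-(μ / s u ^ 3) * r2 u) * (r2 u * v0 u - r0 u * v2 u)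
          + v2 u * ((v2 u * v0 u + r2 u * (-(μ / s u ^ 3) * r0 u))
            - (v0 u * v2 u + r0 u * (-(μ / s u ^ 3) * r2 u))))) u :=
      ((hv1 u).mul (((hr0 u).mul (hv1 u)).sub ((hr1 u).mul (hv0 u)))).sub
        ((hv2 u).mul (((hr2 u).mul (hv0 u)).sub ((hr0 u).mul (hv2 u))))
    have := h2.sub h1
    convert this using 1
    · rfl
    · rfl
    · rfl
    have hs2 := hs u
    field_simp
    linear_combination (μ * v0 u) * hs2
  have hd : Differentiable ℝ _ := fun u => (key u).differentiableAt
  exact is_const_of_deriv_eq_zero hd (fun u => (key u).deriv) t 0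

/-- Conservation of the Laplace–Runge–Lenz vector
A(t) = v(t) × (r(t) × v(t)) − μ r(t)/|r(t)| along Kepler dynamics. -/
theorem kepler_lrl_conserved
    (μ : ℝ) (hμ : 0 < μ)
    (r v : ℝ → EuclideanSpace ℝ (Fin 3))
    (hr0 : ∀ t, r t ≠ 0)
    (hrd : ∀ t, HasDerivAt r (v t) t)
    (hvd : ∀ t, HasDerivAt v (-(μ / ‖r t‖ ^ 3) • r t) t) :
    ∀ t : ℝ,
      cross (v t) (cross (r t) (v t)) - (μ / ‖r t‖) • r t =
      cross (v 0) (cross (r 0) (v 0)) - (μ / ‖r 0‖) • r 0 := by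
  have hspos : ∀ t, 0 < ‖r t‖ := fun t => norm_pos_iff.mpr (hr0 t)
  have hsq : ∀ t, ‖r t‖ ^ 2 = r t 0 ^ 2 + r t 1 ^ 2 + r t 2 ^ 2 := by
    intro t
    rw [EuclideanSpace.norm_eq, Real.sq_sqrt (by positivity), Fin.sum_univ_three]
    simp [sq_abs]
  have hrc : ∀ i, ∀ t, HasDerivAt (fun t => r t i) (v t i) t :=
    fun i t => comp_deriv' r (v t) t (hrd t) i
  have hvc : ∀ i, ∀ t, HasDerivAt (fun t => v t i) (-(μ / ‖r t‖ ^ 3) * r t i) t :=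
    fun i t => comp_deriv' v _ t (hvd t) i
  have hsd : ∀ t, HasDerivAt (fun t => ‖r t‖)
      ((r t 0 * v t 0 + r t 1 * v t 1 + r t 2 * v t 2) / ‖r t‖) t := by
    intro t
    have hf : HasDerivAt (fun t => r t 0 ^ 2 + r t 1 ^ 2 + r t 2 ^ 2)
        (2 * r t 0 * v t 0 + 2 * r t 1 * v t 1 + 2 * r t 2 * v t 2) t := by
      have h0 := ((hrc 0 t).pow 2)
      have h1 := ((hrc 1 t).pow 2)
      have h2 := ((hrc 2 t).pow 2)
      convert (h0.add h1).add h2 using 1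
      · rfl
      · rfl
      · rfl
      ring
    have hfpos : (0:ℝ) < r t 0 ^ 2 + r t 1 ^ 2 + r t 2 ^ 2 := by
      rw [← hsq t]; exact pow_pos (hspos t) 2
    have := (Real.hasDerivAt_sqrt hfpos.ne').comp t hf
    have heq : (fun t => Real.sqrt (r t 0 ^ 2 + r t 1 ^ 2 + r t 2 ^ 2))
        = fun t => ‖r t‖ := by
      funext u
      rw [← hsq u, Real.sqrt_sq (hspos u).le]
    rw [Function.comp_def, heq] at this
    convert this using 1
    · rfl
    · rfl
    rw [← hsq t, Real.sqrt_sq (hspos t).le]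
    field_simp
  set s : ℝ → ℝ := fun t => ‖r t‖ with hs_def
  have key0 := scalar_key μ (fun t => r t 0) (fun t => r t 1) (fun t => r t 2)
    (fun t => v t 0) (fun t => v t 1) (fun t => v t 2) s
    hsq hspos (hrc 0) (hrc 1) (hrc 2) (hvc 0) (hvc 1) (hvc 2) hsd
  have key1 := scalar_key μ (fun t => r t 1) (fun t => r t 2) (fun t => r t 0)
    (fun t => v t 1) (fun t => v t 2) (fun t => v t 0) s
    (fun t => by rw [hsq t]; ring) hspos (hrc 1) (hrc 2) (hrc 0) (hvc 1) (hvc 2) (hvc 0)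
    (fun t => by convert hsd t using 2; ring)
  have key2 := scalar_key μ (fun t => r t 2) (fun t => r t 0) (fun t => r t 1)
    (fun t => v t 2) (fun t => v t 0) (fun t => v t 1) s
    (fun t => by rw [hsq t]; ring) hspos (hrc 2) (hrc 0) (hrc 1) (hvc 2) (hvc 0) (hvc 1)
    (fun t => by convert hsd t using 2; ring)
  intro t
  ext i
  fin_cases i
  · exact key0 t
  · exact key1 t
  · exact key2 t
end

section
/- Sufficiency of the weak formulation: let F : ℝᵐ × ℝ → ℝᵐ be continuous and let x : [a, b] → ℝᵐ be continuous. If for every continuously differentiable test function w : [a, b] → ℝᵐ one has ∫ₐᵇ (⟨w'(t), x(t)⟩ + ⟨w(t), F(x(t), t)⟩) dt − ⟨w(b), x(b)⟩ + ⟨w(a), x(a)⟩ = 0, then x is continuously differentiable on [a, b] and x'(t) = F(x(t), t) for all t ∈ [a, b]. -/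
open scoped RealInnerProductSpace
open MeasureTheory Set intervalIntegral Topology Metric

section Aux

variable {m : ℕ} {a b : ℝ}

private lemma hasDerivWithinAt_singleton' (f : ℝ → EuclideanSpace ℝ (Fin m))
    (c : EuclideanSpace ℝ (Fin m)) (t : ℝ) : HasDerivWithinAt f c {t} t := by
  rw [hasDerivWithinAt_iff_tendsto_slope]
  simp [Set.diff_self]

/-- FTC: derivative within `Icc a b` of the indefinite integral of a function
continuous on `Icc a b`. -/
private lemma ftc_icc {f : ℝ → EuclideanSpace ℝ (Fin m)}
    (hf : ContinuousOn f (Set.Icc a b)) {t : ℝ} (ht : t ∈ Set.Icc a b) :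
    HasDerivWithinAt (fun u => ∫ s in a..u, f s) (f t) (Set.Icc a b) t := by
  haveI : Fact (t ∈ Set.Icc a b) := ⟨ht⟩
  have hint : IntervalIntegrable f volume a t :=
    (hf.mono (Set.Icc_subset_Icc le_rfl ht.2)).intervalIntegrable_of_Icc ht.1
  exact intervalIntegral.integral_hasDerivWithinAt_right hint
    (hf.stronglyMeasurableAtFilter_nhdsWithin measurableSet_Icc t) (hf t ht)

/-- Evaluation form of the FTC for a real function differentiable within `Icc a b`
with continuous derivative. -/
private lemma eval_ftc {g g' : ℝ → ℝ} (hab : a ≤ b)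
    (hg : ∀ t ∈ Set.Icc a b, HasDerivWithinAt g (g' t) (Set.Icc a b) t)
    (hg' : ContinuousOn g' (Set.Icc a b)) :
    ∫ t in a..b, g' t = g b - g a := by
  refine intervalIntegral.integral_eq_sub_of_hasDeriv_right_of_le hab
    (fun t ht => (hg t ht).continuousWithinAt)
    (fun t ht => ?_) (hg'.intervalIntegrable_of_Icc hab)
  exact ((hg t (Set.Ioo_subset_Icc_self ht)).hasDerivAt
    (Icc_mem_nhds ht.1 ht.2)).hasDerivWithinAt

/-- A nonnegative function continuous on `[a,b]` with vanishing integral vanishes. -/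
private lemma eq_zero_of_integral_eq_zero {h : ℝ → ℝ} (hab : a < b)
    (hc : ContinuousOn h (Set.Icc a b)) (hnn : ∀ t ∈ Set.Icc a b, 0 ≤ h t)
    (hint : ∫ t in a..b, h t = 0) : ∀ t ∈ Set.Icc a b, h t = 0 := by
  intro t₀ ht₀
  by_contra hne
  have hpos : 0 < h t₀ := lt_of_le_of_ne (hnn t₀ ht₀) (Ne.symm hne)
  set ε : ℝ := h t₀ / 2 with hε
  have hεpos : 0 < ε := by positivity
  have : ∀ᶠ s in 𝓝[Set.Icc a b] t₀, h s > ε := by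
    have := (hc t₀ ht₀).eventually (eventually_gt_nhds (by linarith : ε < h t₀))
    exact this
  obtain ⟨δ, hδpos, hδ⟩ := Metric.mem_nhdsWithin_iff.mp this
  set c : ℝ := max a (t₀ - δ / 2) with hc'
  set d : ℝ := min b (t₀ + δ / 2) with hd'
  have hct : c ≤ t₀ := max_le ht₀.1 (by linarith)
  have htd : t₀ ≤ d := le_min ht₀.2 (by linarith)
  have hcd : c < d := by
    rcases lt_or_ge a t₀ with h1 | h1
    · have : c < t₀ := max_lt h1 (by linarith)
      linarith
    · have ha : t₀ = a := le_antisymm h1 ht₀.1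
      have : t₀ < d := lt_min (ha ▸ hab) (by linarith)
      linarith
  have hsub : Set.Icc c d ⊆ Set.Icc a b :=
    Set.Icc_subset_Icc (le_max_left _ _) (min_le_left _ _)
  have hlb : ∀ s ∈ Set.Icc c d, ε ≤ h s := by
    intro s hs
    have h1 : s ∈ Set.Icc a b := hsub hs
    have h2 : dist s t₀ < δ := by
      rw [Real.dist_eq, abs_sub_lt_iff]
      constructor
      · have := hs.2
        have : s ≤ t₀ + δ / 2 := le_trans this (min_le_right _ _)
        linarith
      · have := hs.1
        have : t₀ - δ / 2 ≤ s := le_trans (le_max_right _ _) this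
        linarith
    exact le_of_lt (hδ ⟨Metric.mem_ball.mpr h2, h1⟩)
  have hi1 : IntervalIntegrable h volume c d :=
    (hc.mono hsub).intervalIntegrable_of_Icc hcd.le
  have hi2 : IntervalIntegrable h volume a b := hc.intervalIntegrable_of_Icc hab.le
  have hmono : ∫ s in c..d, h s ≤ ∫ s in a..b, h s := by
    refine intervalIntegral.integral_mono_interval (le_max_left _ _) hcd.le
      (min_le_left _ _) ?_ hi2
    filter_upwards [ae_restrict_mem measurableSet_Ioc] with s hs
    exact hnn s ⟨hs.1.le, hs.2⟩
  have hconst : ε * (d - c) ≤ ∫ s in c..d, h s := by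
    have := intervalIntegral.integral_mono_on hcd.le
      (_root_.intervalIntegrable_const (c := ε)) hi1 hlb
    rw [intervalIntegral.integral_const, smul_eq_mul] at this
    linarith
  have : (0 : ℝ) < ε * (d - c) := by
    have : 0 < d - c := by linarith
    positivity
  linarith [hint ▸ hmono]

end Aux

/-- Sufficiency of the weak (weighted-residual) formulation, Eq. (32) of the paper:
if a continuous x satisfies the weak form with boundary conditions of the weak type
against every C¹ test function w, then x is (continuously) differentiable on [a,b]
with x'(t) = F(x(t), t) there; the derivative t ↦ F(x(t), t) is automatically
continuous. -/
theorem weak_form_sufficient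
    (m : ℕ) (a b : ℝ) (hab : a ≤ b)
    (F : EuclideanSpace ℝ (Fin m) → ℝ → EuclideanSpace ℝ (Fin m))
    (hF : Continuous fun p : EuclideanSpace ℝ (Fin m) × ℝ => F p.1 p.2)
    (x : ℝ → EuclideanSpace ℝ (Fin m))
    (hx : ContinuousOn x (Set.Icc a b))
    (hweak : ∀ w w' : ℝ → EuclideanSpace ℝ (Fin m),
      (∀ t ∈ Set.Icc a b, HasDerivWithinAt w (w' t) (Set.Icc a b) t) →
      ContinuousOn w' (Set.Icc a b) →
      (∫ t in a..b, (⟪w' t, x t⟫ + ⟪w t, F (x t) t⟫))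
        - ⟪w b, x b⟫ + ⟪w a, x a⟫ = 0) :
    ∀ t ∈ Set.Icc a b, HasDerivWithinAt x (F (x t) t) (Set.Icc a b) t := by
  rcases hab.eq_or_lt with rfl | hlt
  · intro t ht
    obtain rfl : t = a := le_antisymm ht.2 ht.1
    rw [Set.Icc_self]
    exact hasDerivWithinAt_singleton' x _ _
  -- continuity of t ↦ F (x t) t on Icc a b
  have hFx : ContinuousOn (fun t => F (x t) t) (Set.Icc a b) :=
    hF.comp_continuousOn (f := fun t => (x t, t)) (hx.prodMk continuousOn_id)
  -- candidate solution z
  set G : ℝ → EuclideanSpace ℝ (Fin m) := fun u => ∫ s in a..u, F (x s) s with hGdef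
  set z : ℝ → EuclideanSpace ℝ (Fin m) := fun t => x a + G t with hzdef
  have hG : ∀ t ∈ Set.Icc a b, HasDerivWithinAt G (F (x t) t) (Set.Icc a b) t :=
    fun t ht => ftc_icc hFx ht
  have hz : ∀ t ∈ Set.Icc a b, HasDerivWithinAt z (F (x t) t) (Set.Icc a b) t :=
    fun t ht => (hG t ht).const_add (x a)
  have hzcont : ContinuousOn z (Set.Icc a b) := fun t ht => (hz t ht).continuousWithinAt
  have hza : z a = x a := by simp [hzdef, hGdef, intervalIntegral.integral_same]
  -- residual y
  set y : ℝ → EuclideanSpace ℝ (Fin m) := fun t => x t - z t with hydef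
  have hycont : ContinuousOn y (Set.Icc a b) := hx.sub hzcont
  have hya : y a = 0 := by simp [hydef, hza]
  -- key identity: ∫ ⟪w', y⟫ = ⟪w b, y b⟫ for every admissible test function
  have key : ∀ w w' : ℝ → EuclideanSpace ℝ (Fin m),
      (∀ t ∈ Set.Icc a b, HasDerivWithinAt w (w' t) (Set.Icc a b) t) →
      ContinuousOn w' (Set.Icc a b) →
      ∫ t in a..b, ⟪w' t, y t⟫ = ⟪w b, y b⟫ := by
    intro w w' hw hw'
    have hwcont : ContinuousOn w (Set.Icc a b) := fun t ht => (hw t ht).continuousWithinAt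
    have E1 : (∫ t in a..b, (⟪w' t, x t⟫ + ⟪w t, F (x t) t⟫))
        = ⟪w b, x b⟫ - ⟪w a, x a⟫ := by
      have := hweak w w' hw hw'
      linarith
    have E2 : (∫ t in a..b, (⟪w' t, z t⟫ + ⟪w t, F (x t) t⟫))
        = ⟪w b, z b⟫ - ⟪w a, z a⟫ := by
      refine eval_ftc hlt.le (g := fun t => ⟪w t, z t⟫) (fun t ht => ?_) ?_
      · have := (hw t ht).inner ℝ (hz t ht)
        simpa [real_inner_comm, add_comm] using this
      · exact (hw'.inner hzcont).add (hwcont.inner hFx)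
    have I1 : IntervalIntegrable (fun t => ⟪w' t, x t⟫ + ⟪w t, F (x t) t⟫) volume a b :=
      ((hw'.inner hx).add (hwcont.inner hFx)).intervalIntegrable_of_Icc hlt.le
    have I2 : IntervalIntegrable (fun t => ⟪w' t, z t⟫ + ⟪w t, F (x t) t⟫) volume a b :=
      ((hw'.inner hzcont).add (hwcont.inner hFx)).intervalIntegrable_of_Icc hlt.le
    calc ∫ t in a..b, ⟪w' t, y t⟫
        = ∫ t in a..b, ((⟪w' t, x t⟫ + ⟪w t, F (x t) t⟫)
            - (⟪w' t, z t⟫ + ⟪w t, F (x t) t⟫)) := by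
          refine intervalIntegral.integral_congr fun t _ => ?_
          simp [hydef, inner_sub_right]
      _ = (∫ t in a..b, (⟪w' t, x t⟫ + ⟪w t, F (x t) t⟫))
            - ∫ t in a..b, (⟪w' t, z t⟫ + ⟪w t, F (x t) t⟫) :=
          intervalIntegral.integral_sub I1 I2
      _ = (⟪w b, x b⟫ - ⟪w a, x a⟫) - (⟪w b, z b⟫ - ⟪w a, z a⟫) := by rw [E1, E2]
      _ = ⟪w b, y b⟫ := by rw [hza]; simp [hydef, inner_sub_right]
  -- apply the key identity with the test function built from y itself
  set C : EuclideanSpace ℝ (Fin m) := ∫ s in a..b, y s with hCdef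
  have hint0 : ∫ t in a..b, ⟪y t, y t⟫ = 0 := by
    have hw : ∀ t ∈ Set.Icc a b,
        HasDerivWithinAt (fun u => (∫ s in a..u, y s) - C) (y t) (Set.Icc a b) t :=
      fun t ht => (ftc_icc hycont ht).sub_const C
    have := key (fun u => (∫ s in a..u, y s) - C) y hw hycont
    simpa [hCdef] using this
  have yzero : ∀ t ∈ Set.Icc a b, y t = 0 := by
    intro t ht
    have h0 : ⟪y t, y t⟫ = 0 :=
      eq_zero_of_integral_eq_zero hlt (hycont.inner hycont)
        (fun s _ => real_inner_self_nonneg) hint0 t ht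
    exact inner_self_eq_zero.mp h0
  intro t ht
  refine (hz t ht).congr (fun s hs => ?_) ?_
  · have := yzero s hs
    simpa [hydef, sub_eq_zero] using this
  · have := yzero t ht
    simpa [hydef, sub_eq_zero] using this
end

section
/- Hyperbolic Kepler time equation: let (r, v) solve the Kepler dynamics on all of ℝ with ε = ½|v(0)|² − μ/|r(0)| > 0 and h = r(0) × v(0) ≠ 0, and suppose the pericenter occurs at t = 0, i.e. ⟨r(0), v(0)⟩ = 0 and |r(0)| = inf_{t∈ℝ} |r(t)|. Set a = −μ/(2ε) and e = 1 − |r(0)|/a. Then for every t ≥ 0 there exists a unique H ≥ 0 with cosh H = (1/e)(1 − |r(t)|/a), and this H satisfies t = (e sinh H − H) √(|a|³/μ). -/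
open scoped RealInnerProductSpace

private lemma kepler_aux (e x y u ρ b k : ℝ) (hepos : 0 < e) (hx : 0 < x) (hy : 0 < y)
    (hρ : 0 < ρ) (hb : 0 < b)
    (hex : e * x = 1 + ρ / b) (hc : u * k = b ^ 2 * e * y) :
    (e * (1 / (2 * y) * (2 * x * (u / ρ / b / e)))
      - x⁻¹ * (1 / (2 * y) * (2 * x * (u / ρ / b / e)))) * k = 1 := by
  have h1 : (e * (1 / (2 * y) * (2 * x * (u / ρ / b / e)))
      - x⁻¹ * (1 / (2 * y) * (2 * x * (u / ρ / b / e)))) * k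
      = (e * x - 1) * (u * k) / (y * ρ * b * e) := by
    field_simp
  rw [h1, hc, hex]
  have h3 : (1 + ρ / b - 1) = ρ / b := by ring
  rw [h3]
  field_simp

set_option maxHeartbeats 2000000 in
/-- Hyperbolic Kepler time equation (paper's Eqs. (14)–(15)): on a hyperbolic
Kepler orbit with pericenter at t = 0, for every t ≥ 0 there is a unique H ≥ 0
with cosh H = (1/e)(1 − |r(t)|/a), and this H satisfies
t = (e sinh H − H) √(|a|³/μ). -/
theorem kepler_hyperbolic_time_equation
    (μ : ℝ) (hμ : 0 < μ)
    (r v : ℝ → EuclideanSpace ℝ (Fin 3))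
    (hr0 : ∀ t, r t ≠ 0)
    (hrd : ∀ t, HasDerivAt r (v t) t)
    (hvd : ∀ t, HasDerivAt v (-(μ / ‖r t‖ ^ 3) • r t) t)
    (ε : ℝ) (hεdef : ε = (1 / 2) * ‖v 0‖ ^ 2 - μ / ‖r 0‖) (hε : 0 < ε)
    (hh : cross (r 0) (v 0) ≠ 0)
    (hperi : ⟪r 0, v 0⟫ = 0)
    (hmin : ∀ t : ℝ, ‖r 0‖ ≤ ‖r t‖)
    (a e : ℝ) (ha : a = -μ / (2 * ε)) (he : e = 1 - ‖r 0‖ / a) :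
    ∀ t : ℝ, 0 ≤ t →
      (∃! H : ℝ, 0 ≤ H ∧ Real.cosh H = (1 / e) * (1 - ‖r t‖ / a)) ∧
      (∀ H : ℝ, 0 ≤ H → Real.cosh H = (1 / e) * (1 - ‖r t‖ / a) →
        t = (e * Real.sinh H - H) * Real.sqrt (|a| ^ 3 / μ)) := by
  have hρpos : ∀ t, (0:ℝ) < ‖r t‖ := fun t => norm_pos_iff.mpr (hr0 t)
  have hρne : ∀ t, ‖r t‖ ≠ 0 := fun t => (hρpos t).ne'
  -- derivatives of the basic scalar quantities
  have hqd : ∀ t, HasDerivAt (fun s => (⟪r s, r s⟫ : ℝ)) (2 * ⟪r t, v t⟫) t := by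
    intro t
    have h := HasDerivAt.inner ℝ (hrd t) (hrd t)
    refine h.congr_deriv ?_
    rw [real_inner_comm (v t) (r t)]; ring
  have hud : ∀ t, HasDerivAt (fun s => (⟪r s, v s⟫ : ℝ)) (⟪v t, v t⟫ - μ / ‖r t‖) t := by
    intro t
    have h := HasDerivAt.inner ℝ (hrd t) (hvd t)
    refine h.congr_deriv ?_
    rw [real_inner_smul_right]; simp only [real_inner_self_eq_norm_sq]
    have h2 : -(μ / ‖r t‖ ^ 3) * ‖r t‖ ^ 2 = -(μ / ‖r t‖) := by
      field_simp [hρne t]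
    rw [h2]; ring
  have hwd : ∀ t, HasDerivAt (fun s => (⟪v s, v s⟫ : ℝ))
      (-(2 * μ / ‖r t‖ ^ 3) * ⟪r t, v t⟫) t := by
    intro t
    have h := HasDerivAt.inner ℝ (hvd t) (hvd t)
    refine h.congr_deriv ?_
    rw [real_inner_smul_right, real_inner_smul_left, real_inner_comm (v t) (r t)]
    ring
  have hρd : ∀ t, HasDerivAt (fun s => ‖r s‖) (⟪r t, v t⟫ / ‖r t‖) t := by
    intro t
    have hne : (⟪r t, r t⟫ : ℝ) ≠ 0 := by
      rw [real_inner_self_eq_norm_sq]; exact pow_ne_zero 2 (hρne t)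
    have h := (Real.hasDerivAt_sqrt hne).comp t (hqd t)
    simp only [Function.comp_def] at h
    have heq : (fun s => Real.sqrt ⟪r s, r s⟫) = fun s => ‖r s‖ := by
      funext s; rw [real_inner_self_eq_norm_sq, Real.sqrt_sq (norm_nonneg _)]
    rw [heq] at h
    refine h.congr_deriv ?_
    rw [real_inner_self_eq_norm_sq, Real.sqrt_sq (norm_nonneg _)]
    field_simp [hρne t]
  -- energy conservation
  have hEd : ∀ t, HasDerivAt (fun s => (1/2) * ⟪v s, v s⟫ - μ * (‖r s‖)⁻¹) 0 t := by
    intro t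
    have h1 := (hwd t).const_mul (1/2 : ℝ)
    have h2 := ((hρd t).inv (hρne t)).const_mul μ
    have h := h1.sub h2
    refine h.congr_deriv ?_
    field_simp [hρne t]
    ring
  have hEconst : ∀ t, (1/2) * (⟪v t, v t⟫:ℝ) - μ * (‖r t‖)⁻¹
      = (1/2) * ⟪v 0, v 0⟫ - μ * (‖r 0‖)⁻¹ :=
    fun t => is_const_of_deriv_eq_zero (fun s => (hEd s).differentiableAt)
      (fun s => (hEd s).deriv) t 0
  have henergy : ∀ t, (⟪v t, v t⟫:ℝ) = 2*ε + 2*μ/‖r t‖ := by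
    intro t
    have h := hEconst t
    have h0 : (1/2) * (⟪v 0, v 0⟫:ℝ) - μ * (‖r 0‖)⁻¹ = ε := by
      rw [real_inner_self_eq_norm_sq, hεdef]; ring
    rw [h0] at h
    have hx := hρne t
    field_simp at h ⊢
    linarith
  -- conservation of G = ⟪r,r⟫⟪v,v⟫ - ⟪r,v⟫²
  have hGd : ∀ t, HasDerivAt (fun s => (⟪r s, r s⟫:ℝ) * ⟪v s, v s⟫ - ⟪r s, v s⟫^2) 0 t := by
    intro t
    have h := ((hqd t).mul (hwd t)).sub ((hud t).pow 2)
    refine h.congr_deriv ?_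
    simp only [real_inner_self_eq_norm_sq]
    field_simp [hρne t]
    ring
  have hGconst : ∀ t, (⟪r t, r t⟫:ℝ) * ⟪v t, v t⟫ - ⟪r t, v t⟫^2
      = ⟪r 0, r 0⟫ * ⟪v 0, v 0⟫ - ⟪r 0, v 0⟫^2 :=
    fun t => is_const_of_deriv_eq_zero (fun s => (hGd s).differentiableAt)
      (fun s => (hGd s).deriv) t 0
  have hu2 : ∀ t, (⟪r t, v t⟫:ℝ)^2
      = 2*ε*(‖r t‖^2 - ‖r 0‖^2) + 2*μ*(‖r t‖ - ‖r 0‖) := by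
    intro t
    have h := hGconst t
    simp only [real_inner_self_eq_norm_sq] at h
    have henergy' : ∀ s, ‖v s‖^2 = 2*ε + 2*μ/‖r s‖ := by
      intro s; rw [← real_inner_self_eq_norm_sq]; exact henergy s
    rw [hperi, henergy' t, henergy' 0] at h
    have e1 : ∀ s, ‖r s‖^2 * (2*ε + 2*μ/‖r s‖) = 2*ε*‖r s‖^2 + 2*μ*‖r s‖ := by
      intro s; field_simp [hρne s]
    rw [e1 t, e1 0] at h
    nlinarith [h]
  -- radial monotonicity after pericenter
  have humono : StrictMono (fun s => (⟪r s, v s⟫:ℝ)) := by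
    apply strictMono_of_deriv_pos
    intro s
    rw [(hud s).deriv, henergy s]
    have h1 : 0 < μ/‖r s‖ := div_pos hμ (hρpos s)
    have h2 : (2:ℝ)*μ/‖r s‖ = 2*(μ/‖r s‖) := by ring
    linarith
  have hupos : ∀ t, 0 < t → 0 < (⟪r t, v t⟫:ℝ) := by
    intro t ht
    have := humono ht
    simpa [hperi] using this
  have hρgt : ∀ t, 0 < t → ‖r 0‖ < ‖r t‖ := by
    intro t ht
    rcases (hmin t).lt_or_eq with h | h
    · exact h
    · exfalso
      have h2 := hu2 t
      rw [← h] at h2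
      have := hupos t ht
      nlinarith
  -- the geometric quantities
  have hb : (0:ℝ) < μ/(2*ε) := by positivity
  set b : ℝ := μ/(2*ε) with hbdef
  have hab : a = -b := by rw [ha]; ring
  have habs : |a| = b := by rw [hab, abs_neg, abs_of_pos hb]
  have he' : e = 1 + ‖r 0‖/b := by
    rw [he, hab, div_neg]; ring
  have he1 : 1 < e := by
    rw [he']
    have : 0 < ‖r 0‖/b := div_pos (hρpos 0) hb
    linarith
  have hepos : (0:ℝ) < e := by linarith
  have hεb : 2*ε = μ/b := by rw [hbdef]; field_simp
  set X : ℝ → ℝ := fun s => (1 + ‖r s‖/b)/e with hXdef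
  have hXeq : ∀ s, (1/e) * (1 - ‖r s‖/a) = X s := by
    intro s; simp only [hXdef]; rw [hab, div_neg]; ring
  have hX0 : X 0 = 1 := by
    simp only [hXdef]; rw [← he', div_self hepos.ne']
  have hX1 : ∀ s, 1 ≤ X s := by
    intro s
    simp only [hXdef]
    rw [le_div_iff₀ hepos, one_mul, he']
    have := hmin s
    gcongr
  have hXgt : ∀ s, 0 < s → 1 < X s := by
    intro s hs
    simp only [hXdef]
    rw [lt_div_iff₀ hepos, one_mul, he']
    have := hρgt s hs
    gcongr
  set Y : ℝ → ℝ := fun s => Real.sqrt (X s^2 - 1) with hYdef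
  have hY2 : ∀ s, Y s^2 = X s^2 - 1 := by
    intro s
    have h1 := hX1 s
    exact Real.sq_sqrt (by nlinarith)
  have hYnn : ∀ s, 0 ≤ Y s := fun s => Real.sqrt_nonneg _
  have hYpos : ∀ s, 0 < s → 0 < Y s := by
    intro s hs
    apply Real.sqrt_pos.mpr
    have := hXgt s hs
    nlinarith
  have hY0 : Y 0 = 0 := by simp only [hYdef, hX0]; simp
  have h1Y : ∀ s, Real.sqrt (1 + Y s^2) = X s := by
    intro s
    have h1 : 1 + Y s^2 = X s^2 := by rw [hY2]; ring
    rw [h1, Real.sqrt_sq (le_trans zero_le_one (hX1 s))]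
  have heX : ∀ s, e * X s = 1 + ‖r s‖/b := by
    intro s; simp only [hXdef]; field_simp
  have hkey : ∀ s, (⟪r s, v s⟫:ℝ)^2 = μ * b * e^2 * Y s^2 := by
    intro s
    rw [hY2]
    have h1 : μ * b * e^2 * (X s^2 - 1) = μ * b * ((e * X s)^2 - e^2) := by ring
    rw [h1, heX s, he', hu2 s, hεb]
    field_simp [hb.ne']
    ring
  -- the time function Φ
  set k : ℝ := Real.sqrt (b^3/μ) with hkdef
  have hkpos : 0 < k := Real.sqrt_pos.mpr (by positivity)
  have hk2 : k^2 = b^3/μ := Real.sq_sqrt (by positivity)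
  set Φ : ℝ → ℝ := fun s => (e * Y s - Real.arsinh (Y s)) * k with hΦdef
  have hΦ0 : Φ 0 = 0 := by simp only [hΦdef, hY0, Real.arsinh_zero]; ring
  have hρcont : Continuous (fun s => ‖r s‖) := by
    have hdiff : Differentiable ℝ (fun s => ‖r s‖) := fun s => (hρd s).differentiableAt
    exact hdiff.continuous
  have hXcont : Continuous X := ((continuous_const.add (hρcont.div_const b)).div_const e)
  have hYcont : Continuous Y := Real.continuous_sqrt.comp ((hXcont.pow 2).sub continuous_const)
  have hΦcont : Continuous Φ :=
    ((continuous_const.mul hYcont).sub (Real.continuous_arsinh.comp hYcont)).mul continuous_const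
  -- Φ has derivative 1 for positive times
  have hΦd : ∀ s, 0 < s → HasDerivAt Φ 1 s := by
    intro s hs
    have hXd : HasDerivAt X (⟪r s, v s⟫/‖r s‖/b/e) s :=
      (((hρd s).div_const b).const_add 1).div_const e
    have hne : X s^2 - 1 ≠ 0 := by nlinarith [hXgt s hs]
    have hX2d : HasDerivAt (fun τ => X τ^2 - 1) (2 * X s * (⟪r s, v s⟫/‖r s‖/b/e)) s := by
      have h := (hXd.pow 2).sub_const 1
      refine h.congr_deriv ?_; ring
    have hYd : HasDerivAt Y
        (1/(2 * Y s) * (2 * X s * (⟪r s, v s⟫/‖r s‖/b/e))) s := by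
      have h := (Real.hasDerivAt_sqrt hne).comp s hX2d
      simpa only [Function.comp_def, ← hYdef] using h
    have hAd : HasDerivAt (fun τ => Real.arsinh (Y τ))
        ((Real.sqrt (1 + Y s^2))⁻¹ * (1/(2 * Y s) * (2 * X s * (⟪r s, v s⟫/‖r s‖/b/e)))) s := by
      have h := (Real.hasDerivAt_arsinh (Y s)).comp s hYd
      simpa only [Function.comp_def] using h
    have hd : HasDerivAt Φ
        ((e * (1/(2 * Y s) * (2 * X s * (⟪r s, v s⟫/‖r s‖/b/e)))
          - (Real.sqrt (1 + Y s^2))⁻¹ * (1/(2 * Y s) * (2 * X s * (⟪r s, v s⟫/‖r s‖/b/e)))) * k) s :=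
      ((hYd.const_mul e).sub hAd).mul_const k
    have hYps := hYpos s hs
    have hXps : (0:ℝ) < X s := lt_trans one_pos (hXgt s hs)
    have hups := hupos s hs
    -- the crucial scalar identity u * k = b² e Y
    have hc : ⟪r s, v s⟫ * k = b^2 * e * Y s := by
      have hsq : (⟪r s, v s⟫ * k)^2 = (b^2 * e * Y s)^2 := by
        rw [mul_pow, hkey s, mul_pow, mul_pow, hk2]
        field_simp
      have h1 : (0:ℝ) ≤ ⟪r s, v s⟫ * k := by positivity
      have h2 : (0:ℝ) ≤ b^2 * e * Y s := by positivity
      calc ⟪r s, v s⟫ * k = Real.sqrt ((⟪r s, v s⟫ * k)^2) := (Real.sqrt_sq h1).symm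
        _ = Real.sqrt ((b^2 * e * Y s)^2) := by rw [hsq]
        _ = b^2 * e * Y s := Real.sqrt_sq h2
    have hval : (e * (1/(2 * Y s) * (2 * X s * (⟪r s, v s⟫/‖r s‖/b/e)))
          - (Real.sqrt (1 + Y s^2))⁻¹ * (1/(2 * Y s) * (2 * X s * (⟪r s, v s⟫/‖r s‖/b/e)))) * k
          = 1 := by
      rw [h1Y s]
      exact kepler_aux e (X s) (Y s) _ _ b k hepos hXps hYps (hρpos s) hb (heX s) hc
    rw [hval] at hd
    exact hd
  -- Φ t = t for t ≥ 0
  have hΦt : ∀ t, 0 ≤ t → Φ t = t := by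
    intro t ht
    rcases ht.eq_or_lt with h0 | h0
    · rw [← h0, hΦ0]
    · have hconst : ∀ s, 0 < s → s ≤ t → Φ t - t = Φ s - s := by
        intro s hs hst
        have h := constant_of_has_deriv_right_zero
          (f := fun τ => Φ τ - τ) (a := s) (b := t)
          ((hΦcont.sub continuous_id).continuousOn)
          (fun x hx => by
            have hd := (hΦd x (lt_of_lt_of_le hs hx.1)).sub (hasDerivAt_id x)
            exact (hd.congr_deriv (sub_self 1)).hasDerivWithinAt)
          t ⟨hst, le_refl t⟩
        exact h
      have hlim1 : Filter.Tendsto (fun s => Φ s - s) (nhdsWithin 0 (Set.Ioi 0)) (nhds 0) := by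
        have h := ((hΦcont.sub continuous_id).tendsto 0)
        simp only [Pi.sub_apply, hΦ0, sub_zero, id_eq] at h
        exact h.mono_left nhdsWithin_le_nhds
      have hlim2 : Filter.Tendsto (fun s => Φ s - s) (nhdsWithin 0 (Set.Ioi 0))
          (nhds (Φ t - t)) := by
        apply Filter.Tendsto.congr' _ tendsto_const_nhds
        filter_upwards [Ioo_mem_nhdsGT_of_mem (Set.mem_Ico.mpr ⟨le_refl 0, h0⟩)] with s hs
        exact hconst s hs.1 hs.2.le
      have := tendsto_nhds_unique hlim2 hlim1
      linarith
  -- conclusion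
  intro t ht
  have hXt1 := hX1 t
  have hsinh : ∀ H : ℝ, 0 ≤ H → Real.cosh H = X t → Real.sinh H = Y t := by
    intro H hH0 hHc
    have h1 : Real.sinh H ^ 2 = X t^2 - 1 := by
      have h := Real.cosh_sq H
      rw [hHc] at h
      linarith
    calc Real.sinh H = Real.sqrt (Real.sinh H ^ 2) :=
          (Real.sqrt_sq (Real.sinh_nonneg_iff.mpr hH0)).symm
      _ = Real.sqrt (X t^2 - 1) := by rw [h1]
      _ = Y t := by rw [hYdef]
  have hHuniq : ∀ H : ℝ, 0 ≤ H → Real.cosh H = X t → H = Real.arsinh (Y t) := by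
    intro H hH0 hHc
    rw [← Real.arsinh_sinh H, hsinh H hH0 hHc]
  constructor
  · refine ⟨Real.arsinh (Y t), ⟨Real.arsinh_nonneg_iff.mpr (hYnn t), ?_⟩, ?_⟩
    · rw [Real.cosh_arsinh, h1Y t, hXeq t]
    · intro H hH
      rw [hXeq t] at hH
      exact hHuniq H hH.1 hH.2
  · intro H hH0 hHc
    rw [hXeq t] at hHc
    have hs := hsinh H hH0 hHc
    have hH := hHuniq H hH0 hHc
    have hΦ := hΦt t ht
    rw [hΦdef] at hΦ
    simp only at hΦ
    rw [habs, ← hkdef, ← hΦ, hs, hH]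
end

section
/- Escape along hyperbolic orbits: let (r, v) solve the Kepler dynamics on all of ℝ with ε = ½|v(0)|² − μ/|r(0)| > 0 and h = r(0) × v(0) ≠ 0. Then |r(t)| → ∞ both as t → +∞ and as t → −∞; moreover |v(t)|² = 2ε + 2μ/|r(t)| ≥ 2ε for all t, so |v(t)| → √(2ε) as t → ±∞. -/
open Filter Real

local notation "⟪" x ", " y "⟫" => @inner ℝ _ _ x y

private lemma sqrt_tendsto_atTop : Tendsto Real.sqrt atTop atTop := by
  apply tendsto_atTop_atTop.2
  intro b
  refine ⟨b ^ 2, fun a ha => ?_⟩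
  calc b ≤ |b| := le_abs_self b
    _ = Real.sqrt (b ^ 2) := (Real.sqrt_sq_eq_abs b).symm
    _ ≤ Real.sqrt a := Real.sqrt_le_sqrt ha

/-- Escape along hyperbolic Kepler orbits: |r(t)| → ∞ as t → ±∞; moreover
|v(t)|² = 2ε + 2μ/|r(t)| ≥ 2ε for all t, so |v(t)| → √(2ε) as t → ±∞. -/
theorem kepler_hyperbolic_escape
    (μ : ℝ) (hμ : 0 < μ)
    (r v : ℝ → EuclideanSpace ℝ (Fin 3))
    (hr0 : ∀ t, r t ≠ 0)
    (hrd : ∀ t, HasDerivAt r (v t) t)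
    (hvd : ∀ t, HasDerivAt v (-(μ / ‖r t‖ ^ 3) • r t) t)
    (ε : ℝ) (hεdef : ε = (1 / 2) * ‖v 0‖ ^ 2 - μ / ‖r 0‖) (hε : 0 < ε)
    (hh : cross (r 0) (v 0) ≠ 0) :
    Filter.Tendsto (fun t => ‖r t‖) Filter.atTop Filter.atTop ∧
    Filter.Tendsto (fun t => ‖r t‖) Filter.atBot Filter.atTop ∧
    (∀ t : ℝ, ‖v t‖ ^ 2 = 2 * ε + 2 * μ / ‖r t‖) ∧
    (∀ t : ℝ, 2 * ε ≤ ‖v t‖ ^ 2) ∧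
    Filter.Tendsto (fun t => ‖v t‖) Filter.atTop (nhds (Real.sqrt (2 * ε))) ∧
    Filter.Tendsto (fun t => ‖v t‖) Filter.atBot (nhds (Real.sqrt (2 * ε))) := by
  have hnpos : ∀ t, (0 : ℝ) < ‖r t‖ := fun t => norm_pos_iff.2 (hr0 t)
  have hnne : ∀ t, ‖r t‖ ≠ 0 := fun t => (hnpos t).ne'
  -- ρ t = ⟪r t, r t⟫ = ‖r t‖²
  set ρ : ℝ → ℝ := fun t => ⟪r t, r t⟫ with hρdef
  have hρ : ∀ t, ρ t = ‖r t‖ ^ 2 := fun t => real_inner_self_eq_norm_sq (r t)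
  have hρpos : ∀ t, 0 < ρ t := fun t => by rw [hρ t]; exact pow_pos (hnpos t) 2
  have hρd : ∀ t, HasDerivAt ρ (2 * ⟪r t, v t⟫) t := by
    intro t
    have h := (hrd t).inner ℝ (hrd t)
    refine h.congr_deriv ?_
    rw [real_inner_comm (v t) (r t)]
    ring
  -- norm has derivative ⟪r,v⟫/‖r‖
  have hnormd : ∀ t, HasDerivAt (fun s => ‖r s‖) (⟪r t, v t⟫ / ‖r t‖) t := by
    intro t
    have hs : HasDerivAt (fun s => Real.sqrt (ρ s))
        (1 / (2 * Real.sqrt (ρ t)) * (2 * ⟪r t, v t⟫)) t :=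
      (Real.hasDerivAt_sqrt (hρpos t).ne').comp t (hρd t)
    have heq : (fun s => Real.sqrt (ρ s)) = fun s => ‖r s‖ := by
      funext s; rw [hρ s, Real.sqrt_sq (norm_nonneg _)]
    rw [heq] at hs
    have : Real.sqrt (ρ t) = ‖r t‖ := by rw [hρ t, Real.sqrt_sq (norm_nonneg _)]
    rw [this] at hs
    convert hs using 1
    have hn := hnne t
    field_simp
  -- energy conservation
  set E : ℝ → ℝ := fun t => (1 / 2) * ⟪v t, v t⟫ - μ / ‖r t‖ with hEdef
  have hEd : ∀ t, HasDerivAt E 0 t := by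
    intro t
    have h1 : HasDerivAt (fun s => (1 / 2 : ℝ) * ⟪v s, v s⟫)
        ((1 / 2) * (⟪v t, -(μ / ‖r t‖ ^ 3) • r t⟫ + ⟪-(μ / ‖r t‖ ^ 3) • r t, v t⟫)) t :=
      ((hvd t).inner ℝ (hvd t)).const_mul _
    have h2 : HasDerivAt (fun s => μ / ‖r s‖)
        (μ * (-(⟪r t, v t⟫ / ‖r t‖) / ‖r t‖ ^ 2)) t := by
      have h := ((hnormd t).inv (hnne t)).const_mul μ
      have heq : (fun s => μ / ‖r s‖) = fun s => μ * (‖r s‖)⁻¹ := by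
        funext s; rw [div_eq_mul_inv]
      rw [heq]
      exact h
    have := h1.sub h2
    refine this.congr_deriv ?_
    rw [real_inner_smul_left, real_inner_smul_right, real_inner_comm (v t) (r t)]
    field_simp
    ring
  have hEconst : ∀ t, E t = E 0 := by
    intro t
    have hdiff : Differentiable ℝ E := fun x => (hEd x).differentiableAt
    have hderiv : ∀ x, deriv E x = 0 := fun x => (hEd x).deriv
    exact is_const_of_deriv_eq_zero hdiff hderiv t 0
  have hE0 : E 0 = ε := by
    rw [hεdef]
    show (1 / 2 : ℝ) * ⟪v 0, v 0⟫ - μ / ‖r 0‖ = 1 / 2 * ‖v 0‖ ^ 2 - μ / ‖r 0‖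
    rw [real_inner_self_eq_norm_sq]
  -- part 3: energy identity
  have hviv : ∀ t, ⟪v t, v t⟫ = ‖v t‖ ^ 2 := fun t => real_inner_self_eq_norm_sq (v t)
  have h3 : ∀ t : ℝ, ‖v t‖ ^ 2 = 2 * ε + 2 * μ / ‖r t‖ := by
    intro t
    have := hEconst t
    rw [hE0, hEdef] at this
    simp only [hviv] at this
    field_simp at this ⊢
    linarith [mul_div_assoc 2 μ ‖r t‖]
  have h4 : ∀ t : ℝ, 2 * ε ≤ ‖v t‖ ^ 2 := by
    intro t
    rw [h3 t]
    have : 0 < 2 * μ / ‖r t‖ := div_pos (by positivity) (hnpos t)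
    linarith
  -- σ = ρ', σ' = 4ε + 2μ/‖r‖
  set σ : ℝ → ℝ := fun t => 2 * ⟪r t, v t⟫ with hσdef
  have hσd : ∀ t, HasDerivAt σ (4 * ε + 2 * μ / ‖r t‖) t := by
    intro t
    have := ((hrd t).inner ℝ (hvd t)).const_mul (2 : ℝ)
    refine this.congr_deriv ?_
    rw [real_inner_smul_right, real_inner_self_eq_norm_sq, hviv]
    rw [h3 t]
    have hn := hnne t
    field_simp
    ring
  -- g t = ρ t - σ 0 * t - 2ε t²; g' t = σ t - σ 0 - 4ε t; g'' > 0
  set g : ℝ → ℝ := fun t => ρ t - σ 0 * t - 2 * ε * t ^ 2 with hgdef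
  set G : ℝ → ℝ := fun t => σ t - σ 0 - 4 * ε * t with hGdef
  have hgd : ∀ t, HasDerivAt g (G t) t := by
    intro t
    have := ((hρd t).sub ((hasDerivAt_id t).const_mul (σ 0))).sub
      (((hasDerivAt_pow 2 t)).const_mul (2 * ε))
    refine this.congr_deriv ?_
    simp [hGdef, hσdef]
    ring
  have hGd : ∀ t, HasDerivAt G (2 * μ / ‖r t‖) t := by
    intro t
    have := ((hσd t).sub_const (σ 0)).sub ((hasDerivAt_id t).const_mul (4 * ε))
    refine this.congr_deriv ?_
    ring
  have hGmono : StrictMono G := by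
    apply strictMono_of_deriv_pos
    intro x
    rw [(hGd x).deriv]
    exact div_pos (by positivity) (hnpos x)
  have hG0 : G 0 = 0 := by simp [hGdef]
  have hgdiff : Differentiable ℝ g := fun x => (hgd x).differentiableAt
  have hgmono : MonotoneOn g (Set.Ici 0) := by
    apply monotoneOn_of_deriv_nonneg (convex_Ici 0) hgdiff.continuous.continuousOn
      hgdiff.differentiableOn
    intro x hx
    rw [(hgd x).deriv]
    rw [interior_Ici] at hx
    rw [← hG0]
    exact (hGmono hx).le
  have hganti : AntitoneOn g (Set.Iic 0) := by
    apply antitoneOn_of_deriv_nonpos (convex_Iic 0) hgdiff.continuous.continuousOn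
      hgdiff.differentiableOn
    intro x hx
    rw [(hgd x).deriv]
    rw [interior_Iic] at hx
    rw [← hG0]
    exact (hGmono hx).le
  have hglb : ∀ t, g 0 ≤ g t := by
    intro t
    rcases le_or_gt 0 t with ht | ht
    · exact hgmono Set.self_mem_Ici ht ht
    · exact hganti ht.le Set.self_mem_Iic ht.le
  have hquad : ∀ t, ρ 0 + σ 0 * t + 2 * ε * t ^ 2 ≤ ρ t := by
    intro t
    have := hglb t
    simp only [hgdef] at this
    simp at this
    linarith
  -- ρ → atTop along atTop and atBot
  have hfeq : (fun t : ℝ => ρ 0 + σ 0 * t + 2 * ε * t ^ 2)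
      = fun t : ℝ => t * (2 * ε * t + σ 0) + ρ 0 := by
    funext t; ring
  have hq_top : Tendsto (fun t : ℝ => ρ 0 + σ 0 * t + 2 * ε * t ^ 2) atTop atTop := by
    rw [hfeq]
    have h1 : Tendsto (fun t : ℝ => t * (2 * ε * t + σ 0)) atTop atTop := by
      apply Tendsto.atTop_mul_atTop₀ tendsto_id
      exact tendsto_atTop_add_const_right _ _ ((tendsto_id.const_mul_atTop (by positivity)))
    exact tendsto_atTop_add_const_right _ _ h1
  have hq_bot : Tendsto (fun t : ℝ => ρ 0 + σ 0 * t + 2 * ε * t ^ 2) atBot atTop := by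
    rw [hfeq]
    have h1 : Tendsto (fun t : ℝ => t * (2 * ε * t + σ 0)) atBot atTop := by
      apply Tendsto.atBot_mul_atBot₀ tendsto_id
      exact tendsto_atBot_add_const_right _ _ ((tendsto_id.const_mul_atBot (by positivity)))
    exact tendsto_atTop_add_const_right _ _ h1
  have hρtop : Tendsto ρ atTop atTop := tendsto_atTop_mono hquad hq_top
  have hρbot : Tendsto ρ atBot atTop := tendsto_atTop_mono hquad hq_bot
  have hnorm_eq : (fun t => ‖r t‖) = fun t => Real.sqrt (ρ t) := by
    funext t; rw [hρ t, Real.sqrt_sq (norm_nonneg _)]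
  have hrtop : Tendsto (fun t => ‖r t‖) atTop atTop := by
    rw [hnorm_eq]; exact sqrt_tendsto_atTop.comp hρtop
  have hrbot : Tendsto (fun t => ‖r t‖) atBot atTop := by
    rw [hnorm_eq]; exact sqrt_tendsto_atTop.comp hρbot
  -- speed tendsto
  have hv_eq : (fun t => ‖v t‖) = fun t => Real.sqrt (2 * ε + 2 * μ / ‖r t‖) := by
    funext t
    rw [← h3 t, Real.sqrt_sq (norm_nonneg _)]
  have hspeed : ∀ (l : Filter ℝ), Tendsto (fun t => ‖r t‖) l atTop →
      Tendsto (fun t => ‖v t‖) l (nhds (Real.sqrt (2 * ε))) := by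
    intro l hl
    rw [hv_eq]
    have h0 : Tendsto (fun t => 2 * ε + 2 * μ / ‖r t‖) l (nhds (2 * ε)) := by
      have hinv : Tendsto (fun t => (‖r t‖)⁻¹) l (nhds 0) := hl.inv_tendsto_atTop
      have := (hinv.const_mul (2 * μ)).const_add (2 * ε)
      simpa [div_eq_mul_inv] using this
    exact (Real.continuous_sqrt.continuousAt.tendsto).comp h0
  exact ⟨hrtop, hrbot, h3, h4, hspeed _ hrtop, hspeed _ hrbot⟩
end
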